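/- Let Θ, Θ': ℝ → ℝⁿ be C¹ with Θ_ε'' and Θ_ε''' bounds: assume |Θ'(s)| ≤ Kε^{-a}, |Θ''(s)| ≤ Kε^{-b}, |Θ'''(s)| ≤ Kε^{-c} for all s, with b < 1 and a + c < 2. Define f(s,t) = √(1+|Θ'(s)|²ε²t²) and W(s,t) = -7|Θ'·Θ''|²ε⁴t⁴/(4f⁶) + (2|Θ''|² + 2Θ'·Θ''' − 3|Θ'|⁴)ε²t²/(4f⁴) + |Θ'|²/(2f²). Then there is K' > 0 with ‖W − |Θ'|²/2‖_{L^∞(ℝ×(-1,1))} ≤ K'(ε^{4-2(a+b)} + ε^{2-2b} + ε^{2-(a+c)} + ε^{2-4a}) for all small ε > 0; in particular W − |Θ'|²/2 → 0 uniformly as ε → 0. -/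

import Mathlib

/-- `f_ε(s,t) = √(1+|Θ'(s)|²ε²t²)` for a curve family. -/
noncomputable def fFun {n : ℕ} (Θ : ℝ → EuclideanSpace ℝ (Fin n)) (ε s t : ℝ) : ℝ :=
  Real.sqrt (1 + ‖deriv Θ s‖ ^ 2 * ε ^ 2 * t ^ 2)

/-- The effective potential
`W = -7|Θ'·Θ''|²ε⁴t⁴/(4f⁶) + (2|Θ''|²+2Θ'·Θ'''-3|Θ'|⁴)ε²t²/(4f⁴) + |Θ'|²/(2f²)`. -/
noncomputable def WFun {n : ℕ} (Θ : ℝ → EuclideanSpace ℝ (Fin n)) (ε s t : ℝ) : ℝ :=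
  -(7 * (inner ℝ (deriv Θ s) (deriv (deriv Θ) s) : ℝ) ^ 2 * ε ^ 4 * t ^ 4)
      / (4 * fFun Θ ε s t ^ 6)
    + (2 * ‖deriv (deriv Θ) s‖ ^ 2
        + 2 * (inner ℝ (deriv Θ s) (deriv (deriv (deriv Θ)) s) : ℝ)
        - 3 * ‖deriv Θ s‖ ^ 4) * ε ^ 2 * t ^ 2 / (4 * fFun Θ ε s t ^ 4)
    + ‖deriv Θ s‖ ^ 2 / (2 * fFun Θ ε s t ^ 2)

set_option maxHeartbeats 1000000 in
lemma ptwise {n : ℕ} (Θ : ℝ → EuclideanSpace ℝ (Fin n)) (ε s t A B C : ℝ)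
    (ht : t ^ 2 ≤ 1)
    (hA : ‖deriv Θ s‖ ≤ A) (hB : ‖deriv (deriv Θ) s‖ ≤ B)
    (hC : ‖deriv (deriv (deriv Θ)) s‖ ≤ C) :
    |WFun Θ ε s t - ‖deriv Θ s‖ ^ 2 / 2| ≤
      7/4 * (A^2 * B^2) * ε ^ 4 + 1/2 * B^2 * ε^2 + 1/2 * (A*C) * ε^2 + 5/4 * A^4 * ε^2 := by
  have hA0 : 0 ≤ A := (norm_nonneg _).trans hA
  have hB0 : 0 ≤ B := (norm_nonneg _).trans hB
  have hC0 : 0 ≤ C := (norm_nonneg _).trans hC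
  simp only [WFun]
  set F := fFun Θ ε s t with hF
  set P := ‖deriv Θ s‖ with hPd
  set Q := ‖deriv (deriv Θ) s‖ with hQd
  set R := ‖deriv (deriv (deriv Θ)) s‖ with hRd
  set I1 : ℝ := inner ℝ (deriv Θ s) (deriv (deriv Θ) s) with hI1d
  set I2 : ℝ := inner ℝ (deriv Θ s) (deriv (deriv (deriv Θ)) s) with hI2d
  have hP0 : 0 ≤ P := norm_nonneg _
  have hQ0 : 0 ≤ Q := norm_nonneg _
  have hR0 : 0 ≤ R := norm_nonneg _
  have hI1 : |I1| ≤ P * Q := abs_real_inner_le_norm _ _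
  have hI2 : |I2| ≤ P * R := abs_real_inner_le_norm _ _
  have hf2 : F ^ 2 = 1 + P^2*ε^2*t^2 := by
    rw [hF, fFun, ← hPd]
    exact Real.sq_sqrt (by positivity)
  have hf1 : (1:ℝ) ≤ F := by
    have h := Real.sqrt_le_sqrt (show (1:ℝ) ≤ 1 + P^2*ε^2*t^2 from le_add_of_nonneg_right (by positivity))
    rw [Real.sqrt_one] at h
    rw [hF, fFun, ← hPd]; exact h
  have hF0 : 0 < F := lt_of_lt_of_le one_pos hf1
  have hF2 : (1:ℝ) ≤ F^2 := one_le_pow₀ hf1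
  have hF4 : (1:ℝ) ≤ F^4 := one_le_pow₀ hf1
  have hF6 : (1:ℝ) ≤ F^6 := one_le_pow₀ hf1
  have ht4 : t^4 ≤ 1 := by nlinarith [sq_nonneg t, sq_nonneg (t^2)]
  -- decompose
  have hrw : P^2/(2*F^2) - P^2/2 = -(P^4*ε^2*t^2)/(2*F^2) := by
    have hne : (2:ℝ)*F^2 ≠ 0 := by positivity
    field_simp
    linear_combination (-P^2) * hf2
  have hsplit : -(7 * I1 ^ 2 * ε ^ 4 * t ^ 4) / (4 * F ^ 6)
      + (2 * Q ^ 2 + 2 * I2 - 3 * P ^ 4) * ε ^ 2 * t ^ 2 / (4 * F ^ 4)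
      + P ^ 2 / (2 * F ^ 2) - P ^ 2 / 2
      = -(7 * I1 ^ 2 * ε ^ 4 * t ^ 4) / (4 * F ^ 6)
      + (2 * Q ^ 2 + 2 * I2 - 3 * P ^ 4) * ε ^ 2 * t ^ 2 / (4 * F ^ 4)
      + (-(P^4*ε^2*t^2)/(2*F^2)) := by
    rw [← hrw]; ring
  rw [hsplit]
  have tri : |(-(7 * I1 ^ 2 * ε ^ 4 * t ^ 4) / (4 * F ^ 6))
      + ((2 * Q ^ 2 + 2 * I2 - 3 * P ^ 4) * ε ^ 2 * t ^ 2 / (4 * F ^ 4))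
      + (-(P^4*ε^2*t^2)/(2*F^2))|
      ≤ |(-(7 * I1 ^ 2 * ε ^ 4 * t ^ 4) / (4 * F ^ 6))|
      + |((2 * Q ^ 2 + 2 * I2 - 3 * P ^ 4) * ε ^ 2 * t ^ 2 / (4 * F ^ 4))|
      + |(-(P^4*ε^2*t^2)/(2*F^2))| :=
    (abs_add_le _ _).trans (add_le_add_left (abs_add_le _ _) _)
  refine tri.trans ?_
  -- term 1
  have hI1sq : I1^2 ≤ A^2*B^2 := by
    have h1 : |I1| ≤ A*B := hI1.trans (mul_le_mul hA hB hQ0 hA0)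
    calc I1^2 = |I1|^2 := (sq_abs I1).symm
      _ ≤ (A*B)^2 := pow_le_pow_left₀ (abs_nonneg _) h1 2
      _ = A^2*B^2 := by ring
  have hI1e : I1^2*ε^4*t^4 ≤ A^2*B^2*ε^4 := by
    have h1 : I1^2*t^4 ≤ A^2*B^2 := by
      calc I1^2*t^4 ≤ I1^2*1 := mul_le_mul_of_nonneg_left ht4 (sq_nonneg I1)
        _ = I1^2 := mul_one _
        _ ≤ A^2*B^2 := hI1sq
    calc I1^2*ε^4*t^4 = (I1^2*t^4)*ε^4 := by ring
      _ ≤ (A^2*B^2)*ε^4 := mul_le_mul_of_nonneg_right h1 (by positivity)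
      _ = A^2*B^2*ε^4 := by ring
  have b1 : |(-(7 * I1 ^ 2 * ε ^ 4 * t ^ 4) / (4 * F ^ 6))| ≤ 7/4 * (A^2*B^2) * ε^4 := by
    rw [abs_div, abs_neg, abs_of_nonneg (by positivity : (0:ℝ) ≤ 7 * I1 ^ 2 * ε ^ 4 * t ^ 4),
      abs_of_pos (by positivity : (0:ℝ) < 4 * F ^ 6)]
    calc 7 * I1 ^ 2 * ε ^ 4 * t ^ 4 / (4 * F ^ 6)
        ≤ 7 * I1 ^ 2 * ε ^ 4 * t ^ 4 / 4 := by
          gcongr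
          linarith [hF6, hF4, hF2]
      _ ≤ 7/4 * (A^2*B^2) * ε^4 := by
          rw [div_le_iff₀ (by norm_num : (0:ℝ) < 4)]
          linarith [hI1e]
  -- term 2
  have hnum : |2 * Q ^ 2 + 2 * I2 - 3 * P ^ 4| ≤ 2*B^2 + 2*(A*C) + 3*A^4 := by
    have h2 : |I2| ≤ A*C := hI2.trans (mul_le_mul hA hC hR0 hA0)
    have h3 : P^4 ≤ A^4 := pow_le_pow_left₀ hP0 hA 4
    have h4 : Q^2 ≤ B^2 := pow_le_pow_left₀ hQ0 hB 2
    rw [abs_le]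
    constructor <;>
      linarith [le_abs_self I2, neg_abs_le I2, pow_nonneg hP0 4, sq_nonneg Q,
        pow_nonneg hA0 4, mul_nonneg hA0 hC0, sq_nonneg B]
  have hnum_e : |2 * Q ^ 2 + 2 * I2 - 3 * P ^ 4| * ε^2 * t^2 ≤ (2*B^2+2*(A*C)+3*A^4)*ε^2 := by
    have h1 : |2 * Q ^ 2 + 2 * I2 - 3 * P ^ 4| * t^2 ≤ 2*B^2+2*(A*C)+3*A^4 := by
      calc |2 * Q ^ 2 + 2 * I2 - 3 * P ^ 4| * t^2 ≤ |2 * Q ^ 2 + 2 * I2 - 3 * P ^ 4| * 1 :=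
            mul_le_mul_of_nonneg_left ht (abs_nonneg _)
        _ = |2 * Q ^ 2 + 2 * I2 - 3 * P ^ 4| := mul_one _
        _ ≤ 2*B^2+2*(A*C)+3*A^4 := hnum
    calc |2 * Q ^ 2 + 2 * I2 - 3 * P ^ 4| * ε^2 * t^2
        = (|2 * Q ^ 2 + 2 * I2 - 3 * P ^ 4| * t^2)*ε^2 := by ring
      _ ≤ (2*B^2+2*(A*C)+3*A^4)*ε^2 := mul_le_mul_of_nonneg_right h1 (sq_nonneg ε)
  have b2 : |((2 * Q ^ 2 + 2 * I2 - 3 * P ^ 4) * ε ^ 2 * t ^ 2 / (4 * F ^ 4))|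
      ≤ 1/2 * B^2 * ε^2 + 1/2 * (A*C) * ε^2 + 3/4 * A^4 * ε^2 := by
    rw [abs_div, abs_mul, abs_mul, abs_of_nonneg (sq_nonneg ε), abs_of_nonneg (sq_nonneg t),
      abs_of_pos (by positivity : (0:ℝ) < 4 * F ^ 4)]
    calc |2 * Q ^ 2 + 2 * I2 - 3 * P ^ 4| * ε ^ 2 * t ^ 2 / (4 * F ^ 4)
        ≤ |2 * Q ^ 2 + 2 * I2 - 3 * P ^ 4| * ε ^ 2 * t ^ 2 / 4 := by
          gcongr
          linarith [hF6, hF4, hF2]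
      _ ≤ 1/2 * B^2 * ε^2 + 1/2 * (A*C) * ε^2 + 3/4 * A^4 * ε^2 := by
          rw [div_le_iff₀ (by norm_num : (0:ℝ) < 4)]
          linarith [hnum_e]
  -- term 3
  have hP4 : P^4 ≤ A^4 := pow_le_pow_left₀ hP0 hA 4
  have hP4e : P^4*ε^2*t^2 ≤ A^4*ε^2 := by
    have h1 : P^4*t^2 ≤ A^4 := by
      calc P^4*t^2 ≤ P^4*1 := mul_le_mul_of_nonneg_left ht (pow_nonneg hP0 4)
        _ = P^4 := mul_one _
        _ ≤ A^4 := hP4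
    calc P^4*ε^2*t^2 = (P^4*t^2)*ε^2 := by ring
      _ ≤ A^4*ε^2 := mul_le_mul_of_nonneg_right h1 (sq_nonneg ε)
  have b3 : |(-(P^4*ε^2*t^2)/(2*F^2))| ≤ 1/2 * A^4 * ε^2 := by
    rw [abs_div, abs_neg, abs_of_nonneg (by positivity : (0:ℝ) ≤ P^4*ε^2*t^2),
      abs_of_pos (by positivity : (0:ℝ) < 2 * F ^ 2)]
    calc P^4*ε^2*t^2 / (2 * F ^ 2) ≤ P^4*ε^2*t^2 / 2 := by
          gcongr
          linarith [hF6, hF4, hF2]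
      _ ≤ 1/2 * A^4 * ε^2 := by
          rw [div_le_iff₀ (by norm_num : (0:ℝ) < 2)]
          linarith [hP4e]
  linarith


set_option maxHeartbeats 1000000 in

/-- Under the bounds `|Θ_ε'| ≤ Kε⁻ᵃ`, `|Θ_ε''| ≤ Kε⁻ᵇ`, `|Θ_ε'''| ≤ Kε⁻ᶜ`
with `b < 1`, `a + c < 2`, there is `K' > 0` with
`‖W_ε − |Θ_ε'|²/2‖_∞ ≤ K'(ε^{4-2(a+b)} + ε^{2-2b} + ε^{2-(a+c)} + ε^{2-4a})`
for all small `ε`; in particular `W_ε − |Θ_ε'|²/2 → 0` uniformly. -/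
theorem stmt_19 (n : ℕ) (a b c K : ℝ) (ha : 0 < a) (ha' : a < 1 / 3)
    (hb : b < 1) (hac : a + c < 2) (hK : 0 < K)
    (Θfam : ℝ → ℝ → EuclideanSpace ℝ (Fin n))
    (hreg : ∀ ε ∈ Set.Ioo (0 : ℝ) 1, ContDiff ℝ 3 (Θfam ε))
    (h1 : ∀ ε ∈ Set.Ioo (0 : ℝ) 1, ∀ s : ℝ, ‖deriv (Θfam ε) s‖ ≤ K * ε ^ (-a))
    (h2 : ∀ ε ∈ Set.Ioo (0 : ℝ) 1, ∀ s : ℝ,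
      ‖deriv (deriv (Θfam ε)) s‖ ≤ K * ε ^ (-b))
    (h3 : ∀ ε ∈ Set.Ioo (0 : ℝ) 1, ∀ s : ℝ,
      ‖deriv (deriv (deriv (Θfam ε))) s‖ ≤ K * ε ^ (-c)) :
    (∃ K' : ℝ, 0 < K' ∧ ∃ ε₀ ∈ Set.Ioc (0 : ℝ) 1, ∀ ε ∈ Set.Ioo (0 : ℝ) ε₀,
      ∀ s : ℝ, ∀ t ∈ Set.Ioo (-1 : ℝ) 1,
        |WFun (Θfam ε) ε s t - ‖deriv (Θfam ε) s‖ ^ 2 / 2|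
          ≤ K' * (ε ^ (4 - 2 * (a + b)) + ε ^ (2 - 2 * b)
              + ε ^ (2 - (a + c)) + ε ^ (2 - 4 * a))) ∧
    Filter.Tendsto
      (fun ε => ⨆ (s : ℝ) (t : Set.Ioo (-1 : ℝ) 1),
        |WFun (Θfam ε) ε s t - ‖deriv (Θfam ε) s‖ ^ 2 / 2|)
      (nhdsWithin 0 (Set.Ioi 0)) (nhds 0) := by
  set K' : ℝ := 2*(K^4 + K^2 + 1) with hK'd
  have hK'pos : 0 < K' := by positivity
  -- the main pointwise bound
  have main : ∀ ε ∈ Set.Ioo (0:ℝ) 1, ∀ s : ℝ, ∀ t ∈ Set.Ioo (-1:ℝ) 1,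
      |WFun (Θfam ε) ε s t - ‖deriv (Θfam ε) s‖ ^ 2 / 2|
        ≤ K' * (ε ^ (4 - 2 * (a + b)) + ε ^ (2 - 2 * b)
            + ε ^ (2 - (a + c)) + ε ^ (2 - 4 * a)) := by
    intro ε hε s t htm
    have hε0 : 0 < ε := hε.1
    have ht2 : t^2 ≤ 1 := by nlinarith [htm.1, htm.2]
    have hpt := ptwise (Θfam ε) ε s t (K*ε^(-a)) (K*ε^(-b)) (K*ε^(-c)) ht2
      (h1 ε hε s) (h2 ε hε s) (h3 ε hε s)
    refine hpt.trans ?_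
    have e1 : (K*ε^(-a))^2*(K*ε^(-b))^2*ε^4 = K^4 * ε^(4-2*(a+b)) := by
      rw [show (4:ℝ)-2*(a+b) = -a + (-a + (-b + (-b + ((4:ℕ):ℝ)))) by push_cast; ring,
        Real.rpow_add hε0, Real.rpow_add hε0, Real.rpow_add hε0, Real.rpow_add hε0,
        Real.rpow_natCast]
      ring
    have e2 : (K*ε^(-b))^2*ε^2 = K^2 * ε^(2-2*b) := by
      rw [show (2:ℝ)-2*b = -b + (-b + ((2:ℕ):ℝ)) by push_cast; ring,
        Real.rpow_add hε0, Real.rpow_add hε0, Real.rpow_natCast]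
      ring
    have e3 : (K*ε^(-a))*(K*ε^(-c))*ε^2 = K^2 * ε^(2-(a+c)) := by
      rw [show (2:ℝ)-(a+c) = -a + (-c + ((2:ℕ):ℝ)) by push_cast; ring,
        Real.rpow_add hε0, Real.rpow_add hε0, Real.rpow_natCast]
      ring
    have e4 : (K*ε^(-a))^4*ε^2 = K^4 * ε^(2-4*a) := by
      rw [show (2:ℝ)-4*a = -a + (-a + (-a + (-a + ((2:ℕ):ℝ)))) by push_cast; ring,
        Real.rpow_add hε0, Real.rpow_add hε0, Real.rpow_add hε0, Real.rpow_add hε0,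
        Real.rpow_natCast]
      ring
    have geq : 7/4 * ((K*ε^(-a))^2 * (K*ε^(-b))^2) * ε ^ 4 + 1/2 * (K*ε^(-b))^2 * ε^2
        + 1/2 * ((K*ε^(-a))*(K*ε^(-c))) * ε^2 + 5/4 * (K*ε^(-a))^4 * ε^2
        = 7/4 * (K^4 * ε^(4-2*(a+b))) + 1/2 * (K^2 * ε^(2-2*b))
          + 1/2 * (K^2 * ε^(2-(a+c))) + 5/4 * (K^4 * ε^(2-4*a)) := by
      rw [← e1, ← e2, ← e3, ← e4]; ring
    rw [geq]
    have E1 : 0 ≤ ε^(4-2*(a+b)) := Real.rpow_nonneg hε0.le _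
    have E2 : 0 ≤ ε^(2-2*b) := Real.rpow_nonneg hε0.le _
    have E3 : 0 ≤ ε^(2-(a+c)) := Real.rpow_nonneg hε0.le _
    have E4 : 0 ≤ ε^(2-4*a) := Real.rpow_nonneg hε0.le _
    have c1 : 7/4 * K^4 ≤ K' := by rw [hK'd]; linarith [pow_pos hK 4, pow_pos hK 2]
    have c2 : 1/2 * K^2 ≤ K' := by rw [hK'd]; linarith [pow_pos hK 4, pow_pos hK 2]
    have c4 : 5/4 * K^4 ≤ K' := by rw [hK'd]; linarith [pow_pos hK 4, pow_pos hK 2]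
    linarith [mul_le_mul_of_nonneg_right c1 E1, mul_le_mul_of_nonneg_right c2 E2,
      mul_le_mul_of_nonneg_right c2 E3, mul_le_mul_of_nonneg_right c4 E4]
  constructor
  · exact ⟨K', hK'pos, 1, ⟨one_pos, le_refl 1⟩, main⟩
  · -- uniform convergence
    haveI : Nonempty ↥(Set.Ioo (-1:ℝ) 1) := ⟨⟨0, by norm_num⟩⟩
    set g : ℝ → ℝ := fun ε => ⨆ (s : ℝ) (t : Set.Ioo (-1 : ℝ) 1),
        |WFun (Θfam ε) ε s t - ‖deriv (Θfam ε) s‖ ^ 2 / 2| with hg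
    set Bnd : ℝ → ℝ := fun ε => K' * (ε ^ (4 - 2 * (a + b)) + ε ^ (2 - 2 * b)
              + ε ^ (2 - (a + c)) + ε ^ (2 - 4 * a)) with hBnd
    have hlow : ∀ ε : ℝ, 0 ≤ g ε := fun ε =>
      Real.iSup_nonneg fun s => Real.iSup_nonneg fun t => abs_nonneg _
    have hupp : ∀ ε ∈ Set.Ioo (0:ℝ) 1, g ε ≤ Bnd ε := by
      intro ε hε
      refine ciSup_le fun s => ciSup_le fun t => ?_
      exact main ε hε s t t.2
    have tp : ∀ p : ℝ, 0 < p →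
        Filter.Tendsto (fun ε : ℝ => ε ^ p) (nhdsWithin 0 (Set.Ioi 0)) (nhds 0) := by
      intro p hp
      have h := (Real.continuousAt_rpow_const 0 p (Or.inr hp.le)).tendsto
      rw [Real.zero_rpow hp.ne'] at h
      exact h.mono_left nhdsWithin_le_nhds
    have p1 : (0:ℝ) < 4 - 2*(a+b) := by linarith
    have p2 : (0:ℝ) < 2 - 2*b := by linarith
    have p3 : (0:ℝ) < 2 - (a+c) := by linarith
    have p4 : (0:ℝ) < 2 - 4*a := by linarith
    have hBtend : Filter.Tendsto Bnd (nhdsWithin 0 (Set.Ioi 0)) (nhds 0) := by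
      have := (Filter.Tendsto.const_mul K'
        ((((tp _ p1).add (tp _ p2)).add (tp _ p3)).add (tp _ p4)))
      simpa using this
    refine tendsto_of_tendsto_of_tendsto_of_le_of_le' tendsto_const_nhds hBtend ?_ ?_
    · exact Filter.Eventually.of_forall hlow
    · filter_upwards [Ioo_mem_nhdsGT_of_mem (by constructor <;> norm_num :
        (0:ℝ) ∈ Set.Ico (0:ℝ) 1)] with ε hε using hupp ε hε
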